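/- For every EL-chart A, the cotype of A lies in P_{m,n,d}, i.e. the cotype μ̃ = (μ̃_{τ,i}) satisfies μ̃_{τ,i} ≥ 0 for all τ, i, and Σ_{i=1}^k Σ_{τ=1}^d μ̃_{τ,i} ≤ km/n for every k = 1,…,n, with equality for k = n. -/

import Mathlib

namespace ELChart

/-- An EL-chart (for parameters `d`, `n` and `mfun τ = m_τ`): a non-empty subset
`A ⊆ ℤ^(d) = (ℤ/dℤ) × ℤ` which is bounded below and satisfies `f(A) ⊆ A` and `A + n ⊆ A`,
where `f (τ, x) = (τ + 1, x + m_τ)`. -/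
def IsChart (d n : ℕ) (mfun : ZMod d → ℤ) (A : Set (ZMod d × ℤ)) : Prop :=
  A.Nonempty ∧ (∃ c : ℤ, ∀ p ∈ A, c ≤ p.2) ∧
    (∀ p ∈ A, ((p.1 + 1 : ZMod d), p.2 + mfun p.1) ∈ A) ∧
    (∀ p ∈ A, (p.1, p.2 + (n : ℤ)) ∈ A)

/-- `B = A ∖ (A + n)`. -/
def Bset (d n : ℕ) (A : Set (ZMod d × ℤ)) : Set (ZMod d × ℤ) :=
  {p | p ∈ A ∧ (p.1, p.2 - (n : ℤ)) ∉ A}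

/-- The shift `A + z` of a subset of `ℤ^(d)`. -/
def shift (d : ℕ) (A : Set (ZMod d × ℤ)) (z : ℤ) : Set (ZMod d × ℤ) :=
  (fun p : ZMod d × ℤ => (p.1, p.2 + z)) '' A

/-- Two EL-charts are equivalent if they differ by a shift. -/
def ChartEquiv (d : ℕ) (A A' : Set (ZMod d × ℤ)) : Prop :=
  ∃ z : ℤ, shift d A z = A'

/-- The sequence `b 0, b 1, …` associated with an EL-chart: `b 0 = min B_(0)` and `b (i+1)`
is the unique element of `B` of the form `f (b i) − c * n` with `c` a non-negative integer. -/
noncomputable def bseq (d n : ℕ) (mfun : ZMod d → ℤ) (A : Set (ZMod d × ℤ)) :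
    ℕ → ZMod d × ℤ
  | 0 => ((0 : ZMod d), sInf {x : ℤ | ((0 : ZMod d), x) ∈ Bset d n A})
  | i + 1 =>
    ((bseq d n mfun A i).1 + 1,
      sInf {y : ℤ | ((bseq d n mfun A i).1 + 1, y) ∈ Bset d n A ∧
        ((bseq d n mfun A i).2 + mfun (bseq d n mfun A i).1 - y) % (n : ℤ) = 0 ∧
        y ≤ (bseq d n mfun A i).2 + mfun (bseq d n mfun A i).1})

/-- The entry `μ'_k` (for `1 ≤ k ≤ d*n`) of the type of an EL-chart: the non-negative integer
with `b k = f (b (k-1)) − μ'_k * n`. -/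
noncomputable def typeInt (d n : ℕ) (mfun : ZMod d → ℤ) (A : Set (ZMod d × ℤ)) (k : ℕ) : ℤ :=
  ((bseq d n mfun A (k - 1)).2 + mfun (bseq d n mfun A (k - 1)).1
    - (bseq d n mfun A k).2) / (n : ℤ)

/-- The type of an EL-chart as a tuple: `μ'_{τ,i} = μ'_{τ + (i−1)d}` where the `Fin d`-index
`τ` corresponds to `τ + 1 ∈ {1, …, d}` and the `Fin n`-index `i` to `i + 1 ∈ {1, …, n}`. -/
noncomputable def typeTup (d n : ℕ) (mfun : ZMod d → ℤ) (A : Set (ZMod d × ℤ)) :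
    Fin d → Fin n → ℤ :=
  fun τ i => typeInt d n mfun A (τ.val + 1 + i.val * d)

/-- The entry `μ'_{τ',i'}` of the type of an EL-chart attached to an element `p = b_{τ',i'}`
of `B`: if `q ∈ B` is the (unique) predecessor of `p`, i.e. the element with
`p = f q − c * n` for a non-negative integer `c`, then `muOf p = c`. -/
noncomputable def muOf (d n : ℕ) (mfun : ZMod d → ℤ) (A : Set (ZMod d × ℤ))
    (p : ZMod d × ℤ) : ℤ :=
  (sInf {y : ℤ | ((p.1 - 1 : ZMod d), y) ∈ Bset d n A ∧
      (y + mfun (p.1 - 1) - p.2) % (n : ℤ) = 0 ∧ p.2 ≤ y + mfun (p.1 - 1)}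
    + mfun (p.1 - 1) - p.2) / (n : ℤ)

/-- The `i`-th largest element `b̃_{τ,i}` of `B_(τ)` (1-indexed: `i ∈ {1, …, n}`): the unique
element of `B_(τ)` with exactly `i − 1` elements of `B_(τ)` above it. -/
noncomputable def btilde (d n : ℕ) (A : Set (ZMod d × ℤ)) (τ : ZMod d) (i : ℕ) : ℤ :=
  sInf {y : ℤ | (τ, y) ∈ Bset d n A ∧
    Set.ncard {z : ℤ | (τ, z) ∈ Bset d n A ∧ y < z} = i - 1}

/-- The cotype of an EL-chart as a tuple: `μ̃_{τ,i} = μ'_{τ',i'}` where `b̃_{τ,i} = b_{τ',i'}`,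
i.e. the type entry attached to the `i`-th largest element of `B_(τ)`. -/
noncomputable def cotypeTup (d n : ℕ) (mfun : ZMod d → ℤ) (A : Set (ZMod d × ℤ)) :
    Fin d → Fin n → ℤ :=
  fun τ i =>
    muOf d n mfun A (((τ.val + 1 : ℕ) : ZMod d),
      btilde d n A ((τ.val + 1 : ℕ) : ZMod d) (i.val + 1))

/-- Membership in `P_{m,n,d}`: all entries are non-negative and
`Σ_{i=1}^k Σ_{τ=1}^d μ_{τ,i} ≤ k*m/n` for `k = 1, …, n`, with equality for `k = n`. -/
def memP (d n m : ℕ) (μ : Fin d → Fin n → ℤ) : Prop :=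
  (∀ τ i, 0 ≤ μ τ i) ∧
    (∀ k : ℕ, 1 ≤ k → k ≤ n →
      (n : ℤ) * ∑ τ : Fin d, ∑ i : Fin n, (if i.val + 1 ≤ k then μ τ i else 0)
        ≤ (k : ℤ) * (m : ℤ)) ∧
    (∑ τ : Fin d, ∑ i : Fin n, μ τ i) = (m : ℤ)

/-- An EL-chart is normalised if `Σ_{b ∈ B_(0)} |b| = n(n−1)/2`. -/
def IsNormalised (d n : ℕ) (A : Set (ZMod d × ℤ)) : Prop :=
  ∑ᶠ x ∈ {x : ℤ | ((0 : ZMod d), x) ∈ Bset d n A}, x = ((n * (n - 1) / 2 : ℕ) : ℤ)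

/-- The dominant rearrangement of a tuple: each component is sorted weakly decreasingly. -/
def domOf (d n : ℕ) (μ : Fin d → Fin n → ℤ) : Fin d → Fin n → ℤ :=
  fun τ i => μ τ (Tuple.sort (fun j => -(μ τ j)) i)

/-- A tuple is dominant if each of its `d` components is weakly decreasing. -/
def IsDom (d n : ℕ) (μ : Fin d → Fin n → ℤ) : Prop :=
  ∀ τ : Fin d, ∀ i j : Fin n, i ≤ j → μ τ j ≤ μ τ i

end ELChart

namespace ELAux
open ELChart

variable {d n : ℕ} {mfun : ZMod d → ℤ} {A : Set (ZMod d × ℤ)}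

lemma mem_f (hA : IsChart d n mfun A) {τ : ZMod d} {y : ℤ} (h : (τ, y) ∈ A) :
    ((τ + 1 : ZMod d), y + mfun τ) ∈ A := hA.2.2.1 (τ, y) h

lemma mem_addn (hA : IsChart d n mfun A) {τ : ZMod d} {y : ℤ} (h : (τ, y) ∈ A) :
    (τ, y + (n : ℤ)) ∈ A := hA.2.2.2 (τ, y) h

lemma mem_add_mul_n (hA : IsChart d n mfun A) {τ : ZMod d} {y : ℤ} (h : (τ, y) ∈ A) (k : ℕ) :
    (τ, y + (k : ℤ) * n) ∈ A := by
  induction k with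
  | zero => simpa using h
  | succ k ih =>
      have h2 := mem_addn hA ih
      have he : y + (k : ℤ) * n + n = y + ((k + 1 : ℕ) : ℤ) * n := by push_cast; ring
      rw [he] at h2
      exact h2

lemma mem_fpow (hA : IsChart d n mfun A) (k : ℕ) {τ : ZMod d} {y : ℤ} (h : (τ, y) ∈ A) :
    ((τ + (k : ZMod d) : ZMod d), y + ∑ j ∈ Finset.range k, mfun (τ + (j : ZMod d)) ) ∈ A := by
  induction k with
  | zero => simpa using h
  | succ k ih =>
      have h2 := mem_f hA ih
      rw [Finset.sum_range_succ]
      convert h2 using 2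
      · push_cast; ring
      · ring

lemma sum_range_comp [NeZero d] (τ : ZMod d) :
    ∑ j ∈ Finset.range d, mfun (τ + (j : ZMod d)) = ∑ σ : ZMod d, mfun σ := by
  have h1 : ∑ j ∈ Finset.range d, mfun (τ + (j : ZMod d))
      = ∑ σ : ZMod d, mfun (τ + σ) := by
    refine Finset.sum_nbij' (fun j => (j : ZMod d)) (fun σ => σ.val) ?_ ?_ ?_ ?_ ?_
    · intro a _; exact Finset.mem_univ _
    · intro a _; exact Finset.mem_range.2 (ZMod.val_lt a)
    · intro a ha; exact ZMod.val_natCast_of_lt (Finset.mem_range.1 ha)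
    · intro a _; simp [ZMod.natCast_val, ZMod.cast_id]
    · intro a _; rfl
  rw [h1]
  exact Fintype.sum_equiv (Equiv.addLeft τ) _ _ (fun σ => rfl)

/-- applying `f` `d` times: add `m` within the same component. -/
lemma mem_addm [NeZero d] (hA : IsChart d n mfun A) {m : ℕ}
    (hsum : ∑ σ : ZMod d, mfun σ = (m : ℤ)) {τ : ZMod d} {y : ℤ} (h : (τ, y) ∈ A) :
    (τ, y + (m : ℤ)) ∈ A := by
  have := mem_fpow hA d h
  rw [sum_range_comp, hsum] at this
  simpa using this

lemma mem_add_mul_m [NeZero d] (hA : IsChart d n mfun A) {m : ℕ}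
    (hsum : ∑ σ : ZMod d, mfun σ = (m : ℤ)) {τ : ZMod d} {y : ℤ} (h : (τ, y) ∈ A) (k : ℕ) :
    (τ, y + (k : ℤ) * m) ∈ A := by
  induction k with
  | zero => simpa using h
  | succ k ih =>
      have h2 := mem_addm hA hsum ih
      have he : y + (k : ℤ) * m + m = y + ((k + 1 : ℕ) : ℤ) * m := by push_cast; ring
      rw [he] at h2
      exact h2

/-- each component of `A` is nonempty. -/
lemma comp_nonempty [NeZero d] (hA : IsChart d n mfun A) (τ : ZMod d) :
    ∃ y : ℤ, (τ, y) ∈ A := by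
  obtain ⟨⟨σ, y⟩, hp⟩ := hA.1
  have h := mem_fpow hA (τ - σ).val hp
  have hστ : σ + (((τ - σ).val : ℕ) : ZMod d) = τ := by
    simp [ZMod.natCast_val, ZMod.cast_id]
  rw [hστ] at h
  exact ⟨_, h⟩

/-- every residue class mod `n` is hit in every component. -/
lemma exists_mem_dvd [NeZero d] (hA : IsChart d n mfun A) {m : ℕ} (hn : 0 < n)
    (hm : 0 < m) (hmn : Nat.Coprime m n) (hsum : ∑ σ : ZMod d, mfun σ = (m : ℤ))
    (τ : ZMod d) (r : ℤ) :
    ∃ y : ℤ, (τ, y) ∈ A ∧ (n : ℤ) ∣ y - r := by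
  obtain ⟨y₀, hy₀⟩ := comp_nonempty hA τ
  obtain ⟨u, v, huv⟩ : ∃ u v : ℤ, u * m + v * n = 1 := by
    have h := Int.isCoprime_iff_gcd_eq_one.2 (by
      rw [Int.gcd_natCast_natCast]; exact hmn)
    obtain ⟨u, v, huv⟩ := h
    exact ⟨u, v, by linarith⟩
  set t : ℤ := (r - y₀) * u with ht
  have hn' : (0:ℤ) < n := by exact_mod_cast hn
  have htnn : 0 ≤ t % n := Int.emod_nonneg t (by positivity)
  have h := mem_add_mul_m hA hsum hy₀ (t % n).toNat
  refine ⟨y₀ + ((t % n).toNat : ℤ) * m, h, ?_⟩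
  rw [Int.toNat_of_nonneg htnn]
  have hmod : t % n = t - n * (t / n) := by rw [Int.emod_def]
  refine ⟨-(r - y₀) * v - (t / n) * m, ?_⟩
  rw [hmod, ht]
  linear_combination (r - y₀) * huv

/-- characterization of `B` as minima of residue classes. -/
lemma mem_B_iff (hA : IsChart d n mfun A) (hn : 0 < n) {τ : ZMod d} {y : ℤ} :
    (τ, y) ∈ Bset d n A ↔
      (τ, y) ∈ A ∧ ∀ y' : ℤ, (τ, y') ∈ A → (n : ℤ) ∣ y' - y → y ≤ y' := by
  have hn' : (0:ℤ) < n := by exact_mod_cast hn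
  constructor
  · rintro ⟨h1, h2⟩
    refine ⟨h1, fun y' hy' hdvd => ?_⟩
    by_contra hlt
    push_neg at hlt
    obtain ⟨c, hc⟩ := hdvd
    have hc1 : 0 ≤ -c - 1 := by nlinarith
    have h3 := mem_add_mul_n hA hy' (-c - 1).toNat
    rw [Int.toNat_of_nonneg hc1] at h3
    have he : y' + (-c - 1) * n = y - n := by linarith
    rw [he] at h3
    exact h2 h3
  · rintro ⟨h1, h2⟩
    refine ⟨h1, fun hmem => ?_⟩
    have := h2 (y - n) hmem ⟨-1, by ring⟩
    linarith

lemma B_unique (hA : IsChart d n mfun A) (hn : 0 < n) {τ : ZMod d} {y y' : ℤ}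
    (h : (τ, y) ∈ Bset d n A) (h' : (τ, y') ∈ Bset d n A) (hd : (n : ℤ) ∣ y' - y) :
    y = y' := by
  have h1 := (mem_B_iff hA hn).1 h
  have h2 := (mem_B_iff hA hn).1 h'
  exact le_antisymm (h1.2 y' h2.1 hd) (h2.2 y h1.1 (by obtain ⟨c, hc⟩ := hd; exact ⟨-c, by linarith⟩))

lemma exists_B_dvd [NeZero d] (hA : IsChart d n mfun A) {m : ℕ} (hn : 0 < n)
    (hm : 0 < m) (hmn : Nat.Coprime m n) (hsum : ∑ σ : ZMod d, mfun σ = (m : ℤ))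
    (τ : ZMod d) (r : ℤ) :
    ∃ y : ℤ, (τ, y) ∈ Bset d n A ∧ (n : ℤ) ∣ y - r := by
  obtain ⟨y₀, hy₀, hd₀⟩ := exists_mem_dvd hA hn hm hmn hsum τ r
  obtain ⟨c, hc⟩ := hA.2.1
  obtain ⟨b, ⟨hbA, hbd⟩, hleast⟩ := Int.exists_least_of_bdd
    (P := fun y => (τ, y) ∈ A ∧ (n : ℤ) ∣ y - r)
    ⟨c, fun z hz => hc (τ, z) hz.1⟩ ⟨y₀, hy₀, hd₀⟩
  refine ⟨b, (mem_B_iff hA hn).2 ⟨hbA, fun y' h1 h2 => hleast y' ⟨h1, ?_⟩⟩, hbd⟩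
  obtain ⟨c1, hc1⟩ := h2
  obtain ⟨c2, hc2⟩ := hbd
  exact ⟨c1 + c2, by linarith⟩


/-- `B_(τ)` as a set of integers. -/
def Bt (d n : ℕ) (A : Set (ZMod d × ℤ)) (τ : ZMod d) : Set ℤ := {y | (τ, y) ∈ Bset d n A}

lemma Bt_finite_card [NeZero d] (hA : IsChart d n mfun A) {m : ℕ} (hn : 0 < n)
    (hm : 0 < m) (hmn : Nat.Coprime m n) (hsum : ∑ σ : ZMod d, mfun σ = (m : ℤ))
    (τ : ZMod d) :
    (Bt d n A τ).Finite ∧ (Bt d n A τ).ncard = n := by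
  have : NeZero n := ⟨hn.ne'⟩
  have hinj : Set.InjOn (fun y : ℤ => (y : ZMod n)) (Bt d n A τ) := by
    intro y hy y' hy' hc
    exact B_unique hA hn hy hy' ((ZMod.intCast_eq_intCast_iff _ _ _).1 hc).dvd
  have himg : (fun y : ℤ => (y : ZMod n)) '' (Bt d n A τ) = Set.univ := by
    refine Set.eq_univ_of_forall fun σ => ?_
    obtain ⟨y, hy, hd⟩ := exists_B_dvd hA hn hm hmn hsum τ (σ.val : ℤ)
    refine ⟨y, hy, ?_⟩
    have : ((σ.val : ℤ) : ZMod n) = (y : ZMod n) :=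
      (ZMod.intCast_eq_intCast_iff _ _ _).2 (Int.modEq_iff_dvd.2 hd)
    show (y : ZMod n) = σ
    rw [← this]
    push_cast
    simp [ZMod.natCast_val, ZMod.cast_id]
  have hfin : (Bt d n A τ).Finite := by
    apply Set.Finite.of_finite_image _ hinj
    rw [himg]; exact Set.finite_univ
  refine ⟨hfin, ?_⟩
  have := Set.ncard_image_of_injOn hinj
  rw [himg, Set.ncard_univ, Nat.card_zmod] at this
  omega

/-- generic: the `i`-th largest element of a finite set of integers. -/
lemma exists_nth_largest (S : Finset ℤ) {i : ℕ} (hi : i < S.card) :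
    ∃ y ∈ S, ((S.filter (fun z => y < z)).card = i ∧
      ∀ y' ∈ S, (S.filter (fun z => y' < z)).card = i → y' = y) := by
  set c := S.card with hc
  have e := S.orderIsoOfFin (rfl : S.card = c)
  have key : ∀ j : Fin c, (S.filter (fun z => (e j : ℤ) < z)).card = c - 1 - j := by
    intro j
    have himg : S.filter (fun z => (e j : ℤ) < z)
        = (Finset.Ioi j).image (fun j' => (e j' : ℤ)) := by
      ext z
      simp only [Finset.mem_filter, Finset.mem_image, Finset.mem_Ioi]
      constructor
      · rintro ⟨hzS, hlt⟩
        refine ⟨e.symm ⟨z, hzS⟩, ?_, by simp⟩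
        rw [← e.lt_iff_lt]
        simp only [OrderIso.apply_symm_apply]; exact hlt
      · rintro ⟨j', hj', rfl⟩
        exact ⟨(e j').2, by exact_mod_cast e.lt_iff_lt.2 hj'⟩
    rw [himg, Finset.card_image_of_injective _ (fun a b hab => e.injective (Subtype.ext hab))]
    simp [Fin.card_Ioi]
  refine ⟨(e ⟨c - 1 - i, by omega⟩ : ℤ), (e _).2, ?_, ?_⟩
  · rw [key]; show c - 1 - (c - 1 - i) = i; omega
  · intro y' hy' hcard
    have hy'e : y' = (e (e.symm ⟨y', hy'⟩) : ℤ) := by simp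
    rw [hy'e] at hcard ⊢
    rw [key] at hcard
    have hlt := (e.symm ⟨y', hy'⟩).isLt
    congr 2
    refine Fin.ext ?_
    show (e.symm ⟨y', hy'⟩).val = c - 1 - i
    change c - 1 - (e.symm ⟨y', hy'⟩).val = i at hcard
    omega

/-- generic rearrangement: a `k`-subset sums to at most the `k` largest elements. -/
lemma sum_subset_le_top (S : Finset ℤ) (bt : ℕ → ℤ)
    (hbt : ∀ i < S.card, bt i ∈ S ∧ (S.filter (fun z => bt i < z)).card = i) :
    ∀ k, k ≤ S.card → ∀ T ⊆ S, T.card = k → ∑ t ∈ T, t ≤ ∑ j ∈ Finset.range k, bt j := by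
  intro k
  induction k with
  | zero =>
      intro _ T _ hT
      simp [Finset.card_eq_zero.1 hT]
  | succ k ih =>
      intro hk T hTS hT
      have hne : T.Nonempty := Finset.card_pos.1 (by omega)
      set t := T.min' hne with htdef
      have htT : t ∈ T := T.min'_mem hne
      obtain ⟨hbtk1, hbtk2⟩ := hbt k (by omega)
      have hmin : t ≤ bt k := by
        by_contra hcon
        push_neg at hcon
        have hsub : T ⊆ S.filter (fun z => bt k < z) := fun x hx =>
          Finset.mem_filter.2 ⟨hTS hx, lt_of_lt_of_le hcon (T.min'_le x hx)⟩
        have := Finset.card_le_card hsub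
        omega
      have herase := ih (by omega) (T.erase t) ((Finset.erase_subset _ _).trans hTS)
        (by rw [Finset.card_erase_of_mem htT, hT]; omega)
      have hsumT : ∑ x ∈ T.erase t, x + t = ∑ x ∈ T, x := Finset.sum_erase_add T _ htT
      rw [Finset.sum_range_succ]
      omega

lemma btilde_spec [NeZero d] (hA : IsChart d n mfun A) {m : ℕ} (hn : 0 < n)
    (hm : 0 < m) (hmn : Nat.Coprime m n) (hsum : ∑ σ : ZMod d, mfun σ = (m : ℤ))
    (τ : ZMod d) (hfin : (Bt d n A τ).Finite) (hcard : hfin.toFinset.card = n)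
    {j : ℕ} (hj : j < n) :
    (τ, btilde d n A τ (j + 1)) ∈ Bset d n A ∧
      (hfin.toFinset.filter (fun z => btilde d n A τ (j + 1) < z)).card = j := by
  obtain ⟨y, hyS, hycard, huniq⟩ := exists_nth_largest hfin.toFinset (i := j) (by omega)
  have hset : ∀ y0 : ℤ, {z : ℤ | (τ, z) ∈ Bset d n A ∧ y0 < z}
      = ↑(hfin.toFinset.filter (fun z => y0 < z)) := by
    intro y0; ext z
    simp only [Set.mem_setOf_eq, Finset.coe_filter, Set.Finite.mem_toFinset]
    exact Iff.rfl
  have hsingleton : {y0 : ℤ | (τ, y0) ∈ Bset d n A ∧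
      Set.ncard {z : ℤ | (τ, z) ∈ Bset d n A ∧ y0 < z} = j} = {y} := by
    ext y0
    simp only [Set.mem_setOf_eq, Set.mem_singleton_iff]
    rw [hset y0, Set.ncard_coe_finset]
    constructor
    · rintro ⟨h1, h2⟩
      exact huniq y0 (by simpa [Set.Finite.mem_toFinset, Bt] using h1) h2
    · rintro rfl
      exact ⟨by simpa [Set.Finite.mem_toFinset, Bt] using hyS, hycard⟩
  have hbt : btilde d n A τ (j + 1) = y := by
    rw [btilde]
    simp only [Nat.add_sub_cancel]
    rw [hsingleton]
    exact csInf_singleton y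
  rw [hbt]
  exact ⟨by simpa [Set.Finite.mem_toFinset, Bt] using hyS, hycard⟩

/-- the predecessor of `b ∈ B_(σ)`. -/
noncomputable def qOf (d n : ℕ) (mfun : ZMod d → ℤ) (A : Set (ZMod d × ℤ))
    (σ : ZMod d) (b : ℤ) : ℤ :=
  sInf {y : ℤ | ((σ - 1 : ZMod d), y) ∈ Bset d n A ∧
      (y + mfun (σ - 1) - b) % (n : ℤ) = 0 ∧ b ≤ y + mfun (σ - 1)}

lemma muOf_spec [NeZero d] (hA : IsChart d n mfun A) {m : ℕ} (hn : 0 < n)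
    (hm : 0 < m) (hmn : Nat.Coprime m n) (hsum : ∑ σ : ZMod d, mfun σ = (m : ℤ))
    {σ : ZMod d} {b : ℤ} (hb : (σ, b) ∈ Bset d n A) :
    ((σ - 1 : ZMod d), qOf d n mfun A σ b) ∈ Bset d n A ∧
      (n : ℤ) * muOf d n mfun A (σ, b) = qOf d n mfun A σ b + mfun (σ - 1) - b ∧
      0 ≤ muOf d n mfun A (σ, b) := by
  obtain ⟨q, hq, hqd0⟩ := exists_B_dvd hA hn hm hmn hsum (σ - 1) (b - mfun (σ - 1))
  have hqd : (n : ℤ) ∣ q + mfun (σ - 1) - b := by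
    have he : q - (b - mfun (σ - 1)) = q + mfun (σ - 1) - b := by ring
    rwa [he] at hqd0
  have hfq : (σ, q + mfun (σ - 1)) ∈ A := by
    have := mem_f hA hq.1
    rwa [sub_add_cancel] at this
  have hble : b ≤ q + mfun (σ - 1) := by
    refine ((mem_B_iff hA hn).1 hb).2 _ hfq ?_
    have he : q + mfun (σ - 1) - b = q + mfun (σ - 1) - b := rfl
    exact hqd
  have hsing : {y : ℤ | ((σ - 1 : ZMod d), y) ∈ Bset d n A ∧
      (y + mfun (σ - 1) - b) % (n : ℤ) = 0 ∧ b ≤ y + mfun (σ - 1)} = {q} := by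
    ext y
    simp only [Set.mem_setOf_eq, Set.mem_singleton_iff]
    constructor
    · rintro ⟨h1, h2, h3⟩
      have hd1 : (n : ℤ) ∣ y + mfun (σ - 1) - b := Int.dvd_of_emod_eq_zero h2
      have hd2 : (n : ℤ) ∣ y - q := by
        have := dvd_sub hd1 hqd
        have he : y + mfun (σ - 1) - b - (q + mfun (σ - 1) - b) = y - q := by ring
        rwa [he] at this
      exact (B_unique hA hn hq h1 hd2).symm
    · rintro rfl
      exact ⟨hq, Int.emod_eq_zero_of_dvd hqd, hble⟩
  have hqOf : qOf d n mfun A σ b = q := by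
    rw [qOf, hsing]
    exact csInf_singleton q
  have hmu : muOf d n mfun A (σ, b)
      = (qOf d n mfun A σ b + mfun (σ - 1) - b) / (n : ℤ) := rfl
  rw [hmu, hqOf]
  refine ⟨hq, Int.mul_ediv_cancel' hqd, Int.ediv_nonneg (by linarith) (by positivity)⟩

lemma qOf_inj [NeZero d] (hA : IsChart d n mfun A) {m : ℕ} (hn : 0 < n)
    (hm : 0 < m) (hmn : Nat.Coprime m n) (hsum : ∑ σ : ZMod d, mfun σ = (m : ℤ))
    {σ : ZMod d} {b b' : ℤ} (hb : (σ, b) ∈ Bset d n A) (hb' : (σ, b') ∈ Bset d n A)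
    (h : qOf d n mfun A σ b = qOf d n mfun A σ b') : b = b' := by
  obtain ⟨_, h1, _⟩ := muOf_spec hA hn hm hmn hsum hb
  obtain ⟨_, h1', _⟩ := muOf_spec hA hn hm hmn hsum hb'
  have hd1 : (n : ℤ) ∣ qOf d n mfun A σ b + mfun (σ - 1) - b := ⟨_, h1.symm⟩
  have hd2 : (n : ℤ) ∣ qOf d n mfun A σ b + mfun (σ - 1) - b' := by
    rw [h]; exact ⟨_, h1'.symm⟩
  have hd : (n : ℤ) ∣ b' - b := by
    have := dvd_sub hd1 hd2
    have he : qOf d n mfun A σ b + mfun (σ - 1) - b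
        - (qOf d n mfun A σ b + mfun (σ - 1) - b') = b' - b := by ring
    rwa [he] at this
  exact B_unique hA hn hb hb' hd

/-- reindexing: `τ ↦ τ+1` as a map `Fin d → ZMod d`. -/
def stFin (d : ℕ) (τ : Fin d) : ZMod d := ((τ.val + 1 : ℕ) : ZMod d)

/-- the `j`-th largest element of `B_(σ)` (0-indexed). -/
noncomputable def btl (d n : ℕ) (A : Set (ZMod d × ℤ)) (σ : ZMod d) (j : ℕ) : ℤ :=
  btilde d n A σ (j + 1)

lemma sum_fin_ite {n k : ℕ} (hk : k ≤ n) (g : ℕ → ℤ) :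
    ∑ i : Fin n, (if i.val + 1 ≤ k then g i.val else 0) = ∑ j ∈ Finset.range k, g j := by
  rw [Fin.sum_univ_eq_sum_range (fun j => if j + 1 ≤ k then g j else 0) n,
    ← Finset.sum_filter]
  congr 1
  ext j
  simp only [Finset.mem_filter, Finset.mem_range]
  omega

end ELAux

open ELChart
open ELAux

/-- For every EL-chart `A`, the cotype of `A` lies in `P_{m,n,d}`: the
cotype `μ̃ = (μ̃_{τ,i})` satisfies `μ̃_{τ,i} ≥ 0` for all `τ, i`, and
`Σ_{i=1}^k Σ_{τ=1}^d μ̃_{τ,i} ≤ k*m/n` for every `k = 1, …, n`, with equality for `k = n`. -/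
theorem cotype_mem_P
    (d n m : ℕ) [NeZero d] (hn : 0 < n) (hm : 0 < m) (hmn : Nat.Coprime m n)
    (mfun : ZMod d → ℤ) (hsum : ∑ τ : ZMod d, mfun τ = (m : ℤ))
    (A : Set (ZMod d × ℤ)) (hA : IsChart d n mfun A) :
    memP d n m (cotypeTup d n mfun A) := by
  classical
  have hfin : ∀ τ : ZMod d, (Bt d n A τ).Finite :=
    fun τ => (Bt_finite_card hA hn hm hmn hsum τ).1
  have hcardF : ∀ τ : ZMod d, (hfin τ).toFinset.card = n := by
    intro τ
    have h := (Bt_finite_card hA hn hm hmn hsum τ).2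
    rwa [Set.ncard_eq_toFinset_card _ (hfin τ)] at h
  have hbt : ∀ (σ : ZMod d) (j : ℕ), j < n →
      (σ, btl d n A σ j) ∈ Bset d n A ∧
      ((hfin σ).toFinset.filter (fun z => btl d n A σ j < z)).card = j :=
    fun σ j hj => btilde_spec hA hn hm hmn hsum σ (hfin σ) (hcardF σ) hj
  have hbtF : ∀ (σ : ZMod d) (j : ℕ), j < n → btl d n A σ j ∈ (hfin σ).toFinset := by
    intro σ j hj
    rw [Set.Finite.mem_toFinset]
    exact (hbt σ j hj).1
  have hbtinj : ∀ (σ : ZMod d) (j j' : ℕ), j < n → j' < n →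
      btl d n A σ j = btl d n A σ j' → j = j' := by
    intro σ j j' hj hj' he
    have h1 := (hbt σ j hj).2
    have h2 := (hbt σ j' hj').2
    rw [he] at h1
    rw [h1] at h2
    exact h2
  have hq := fun (σ : ZMod d) (j : ℕ) (hj : j < n) =>
    muOf_spec hA hn hm hmn hsum (hbt σ j hj).1
  have hqinj : ∀ (σ : ZMod d) (j j' : ℕ), j < n → j' < n →
      qOf d n mfun A σ (btl d n A σ j) = qOf d n mfun A σ (btl d n A σ j') → j = j' :=
    fun σ j j' hj hj' he => hbtinj σ j j' hj hj'
      (qOf_inj hA hn hm hmn hsum (hbt σ j hj).1 (hbt σ j' hj').1 he)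
  have hstbij : Function.Bijective (stFin d) := by
    rw [Function.bijective_iff_has_inverse]
    refine ⟨fun σ => ⟨(σ - 1).val, ZMod.val_lt _⟩, ?_, ?_⟩
    · intro τ
      have h1 : stFin d τ - 1 = ((τ.val : ℕ) : ZMod d) := by
        rw [stFin]; push_cast; ring
      apply Fin.ext
      simp only [h1]
      exact ZMod.val_natCast_of_lt τ.isLt
    · intro σ
      rw [stFin]
      push_cast
      simp [ZMod.natCast_val, ZMod.cast_id]
  have hreidx : ∀ G : ZMod d → ℤ, ∑ τ : Fin d, G (stFin d τ) = ∑ σ : ZMod d, G σ :=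
    fun G => Fintype.sum_bijective _ hstbij _ _ (fun τ => rfl)
  have hsub1 : ∀ G : ZMod d → ℤ, ∑ σ : ZMod d, G (σ - 1) = ∑ σ : ZMod d, G σ :=
    fun G => Fintype.sum_equiv (Equiv.subRight (1 : ZMod d)) _ _ (fun σ => rfl)
  have hcot : ∀ (τ : Fin d) (i : Fin n),
      cotypeTup d n mfun A τ i
        = muOf d n mfun A (stFin d τ, btl d n A (stFin d τ) i.val) :=
    fun τ i => rfl
  have hstep : ∀ k : ℕ, k ≤ n →
      (n : ℤ) * ∑ τ : Fin d, ∑ j ∈ Finset.range k,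
          muOf d n mfun A (stFin d τ, btl d n A (stFin d τ) j)
        = (k : ℤ) * m
          + ((∑ σ : ZMod d, ∑ j ∈ Finset.range k, qOf d n mfun A σ (btl d n A σ j))
            - ∑ σ : ZMod d, ∑ j ∈ Finset.range k, btl d n A σ j) := by
    intro k hk
    rw [Finset.mul_sum]
    have h1 : ∀ τ : Fin d,
        (n : ℤ) * ∑ j ∈ Finset.range k, muOf d n mfun A (stFin d τ, btl d n A (stFin d τ) j)
          = ∑ j ∈ Finset.range k,
              (qOf d n mfun A (stFin d τ) (btl d n A (stFin d τ) j)
                + mfun (stFin d τ - 1) - btl d n A (stFin d τ) j) := by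
      intro τ
      rw [Finset.mul_sum]
      exact Finset.sum_congr rfl fun j hj =>
        (hq (stFin d τ) j (lt_of_lt_of_le (Finset.mem_range.1 hj) hk)).2.1
    rw [Finset.sum_congr rfl fun τ _ => h1 τ]
    rw [hreidx (fun σ => ∑ j ∈ Finset.range k,
      (qOf d n mfun A σ (btl d n A σ j) + mfun (σ - 1) - btl d n A σ j))]
    have h2 : ∀ σ : ZMod d,
        ∑ j ∈ Finset.range k,
            (qOf d n mfun A σ (btl d n A σ j) + mfun (σ - 1) - btl d n A σ j)
          = ((∑ j ∈ Finset.range k, qOf d n mfun A σ (btl d n A σ j))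
              + (k : ℤ) * mfun (σ - 1)) - ∑ j ∈ Finset.range k, btl d n A σ j := by
      intro σ
      rw [Finset.sum_sub_distrib, Finset.sum_add_distrib, Finset.sum_const,
        Finset.card_range, nsmul_eq_mul]
    rw [Finset.sum_congr rfl fun σ _ => h2 σ]
    rw [Finset.sum_sub_distrib, Finset.sum_add_distrib, ← Finset.mul_sum,
      hsub1 mfun, hsum]
    ring
  have himg : ∀ (σ : ZMod d) (k : ℕ), k ≤ n →
      ((Finset.range k).image (fun j => qOf d n mfun A σ (btl d n A σ j))
        ⊆ (hfin (σ - 1)).toFinset)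
        ∧ ((Finset.range k).image (fun j => qOf d n mfun A σ (btl d n A σ j))).card = k
        ∧ ∑ j ∈ Finset.range k, qOf d n mfun A σ (btl d n A σ j)
          = ∑ t ∈ (Finset.range k).image (fun j => qOf d n mfun A σ (btl d n A σ j)), t := by
    intro σ k hk
    have hinj : ∀ x ∈ Finset.range k, ∀ y ∈ Finset.range k,
        qOf d n mfun A σ (btl d n A σ x) = qOf d n mfun A σ (btl d n A σ y) → x = y :=
      fun x hx y hy => hqinj σ x y (lt_of_lt_of_le (Finset.mem_range.1 hx) hk)
        (lt_of_lt_of_le (Finset.mem_range.1 hy) hk)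
    refine ⟨?_, ?_, ?_⟩
    · intro t ht
      obtain ⟨j, hj, rfl⟩ := Finset.mem_image.1 ht
      rw [Set.Finite.mem_toFinset]
      exact (hq σ j (lt_of_lt_of_le (Finset.mem_range.1 hj) hk)).1
    · rw [Finset.card_image_of_injOn hinj, Finset.card_range]
    · exact (Finset.sum_image (f := fun t => t) hinj).symm
  have hperσ : ∀ (σ : ZMod d) (k : ℕ), k ≤ n →
      ∑ j ∈ Finset.range k, qOf d n mfun A σ (btl d n A σ j)
        ≤ ∑ j ∈ Finset.range k, btl d n A (σ - 1) j := by
    intro σ k hk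
    obtain ⟨hsub, hcardT, hsumT⟩ := himg σ k hk
    rw [hsumT]
    refine sum_subset_le_top (hfin (σ - 1)).toFinset (btl d n A (σ - 1)) ?_ k ?_ _ hsub hcardT
    · intro i hi
      rw [hcardF] at hi
      exact ⟨hbtF (σ - 1) i hi, (hbt (σ - 1) i hi).2⟩
    · rw [hcardF]; exact hk
  have hbtlimg : ∀ σ : ZMod d, ∑ j ∈ Finset.range n, btl d n A σ j
      = ∑ t ∈ (hfin σ).toFinset, t := by
    intro σ
    have hinj : ∀ x ∈ Finset.range n, ∀ y ∈ Finset.range n,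
        btl d n A σ x = btl d n A σ y → x = y :=
      fun x hx y hy => hbtinj σ x y (Finset.mem_range.1 hx) (Finset.mem_range.1 hy)
    have hsub : (Finset.range n).image (btl d n A σ) ⊆ (hfin σ).toFinset := by
      intro t ht
      obtain ⟨j, hj, rfl⟩ := Finset.mem_image.1 ht
      exact hbtF σ j (Finset.mem_range.1 hj)
    have hcardI : ((Finset.range n).image (btl d n A σ)).card = n := by
      rw [Finset.card_image_of_injOn hinj, Finset.card_range]
    have heq : (Finset.range n).image (btl d n A σ) = (hfin σ).toFinset :=
      Finset.eq_of_subset_of_card_le hsub (by rw [hcardF, hcardI])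
    calc ∑ j ∈ Finset.range n, btl d n A σ j
        = ∑ t ∈ (Finset.range n).image (btl d n A σ), t := (Finset.sum_image (f := fun t => t) hinj).symm
      _ = ∑ t ∈ (hfin σ).toFinset, t := by rw [heq]
  have hqeq : ∀ σ : ZMod d, ∑ j ∈ Finset.range n, qOf d n mfun A σ (btl d n A σ j)
      = ∑ t ∈ (hfin (σ - 1)).toFinset, t := by
    intro σ
    obtain ⟨hsub, hcardT, hsumT⟩ := himg σ n le_rfl
    have heq : (Finset.range n).image (fun j => qOf d n mfun A σ (btl d n A σ j))
        = (hfin (σ - 1)).toFinset :=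
      Finset.eq_of_subset_of_card_le hsub (by rw [hcardF, hcardT])
    rw [hsumT, heq]
  have hS_le : ∀ k : ℕ, k ≤ n →
      (∑ σ : ZMod d, ∑ j ∈ Finset.range k, qOf d n mfun A σ (btl d n A σ j))
        ≤ ∑ σ : ZMod d, ∑ j ∈ Finset.range k, btl d n A σ j := by
    intro k hk
    have h1 : (∑ σ : ZMod d, ∑ j ∈ Finset.range k, qOf d n mfun A σ (btl d n A σ j))
        ≤ ∑ σ : ZMod d, ∑ j ∈ Finset.range k, btl d n A (σ - 1) j :=
      Finset.sum_le_sum fun σ _ => hperσ σ k hk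
    have h2 := hsub1 (fun σ => ∑ j ∈ Finset.range k, btl d n A σ j)
    linarith
  have hS_eq : (∑ σ : ZMod d, ∑ j ∈ Finset.range n, qOf d n mfun A σ (btl d n A σ j))
      = ∑ σ : ZMod d, ∑ j ∈ Finset.range n, btl d n A σ j := by
    calc (∑ σ : ZMod d, ∑ j ∈ Finset.range n, qOf d n mfun A σ (btl d n A σ j))
        = ∑ σ : ZMod d, ∑ t ∈ (hfin (σ - 1)).toFinset, t :=
          Finset.sum_congr rfl fun σ _ => hqeq σ
      _ = ∑ σ : ZMod d, ∑ t ∈ (hfin σ).toFinset, t :=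
          hsub1 (fun σ => ∑ t ∈ (hfin σ).toFinset, t)
      _ = ∑ σ : ZMod d, ∑ j ∈ Finset.range n, btl d n A σ j :=
          (Finset.sum_congr rfl fun σ _ => hbtlimg σ).symm
  refine ⟨?_, ?_, ?_⟩
  · intro τ i
    rw [hcot]
    exact (hq (stFin d τ) i.val i.isLt).2.2
  · intro k hk1 hk2
    have hconv : ∀ τ : Fin d,
        ∑ i : Fin n, (if i.val + 1 ≤ k then cotypeTup d n mfun A τ i else 0)
          = ∑ j ∈ Finset.range k,
              muOf d n mfun A (stFin d τ, btl d n A (stFin d τ) j) := by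
      intro τ
      simp only [hcot]
      exact sum_fin_ite hk2 (fun j => muOf d n mfun A (stFin d τ, btl d n A (stFin d τ) j))
    rw [Finset.sum_congr rfl fun τ _ => hconv τ]
    have h1 := hstep k hk2
    have h2 := hS_le k hk2
    have : ((m : ℤ) : ℤ) = (m : ℤ) := rfl
    linarith
  · have hconv : ∀ τ : Fin d,
        ∑ i : Fin n, cotypeTup d n mfun A τ i
          = ∑ j ∈ Finset.range n,
              muOf d n mfun A (stFin d τ, btl d n A (stFin d τ) j) := by
      intro τ
      simp only [hcot]
      exact Fin.sum_univ_eq_sum_range (fun j => muOf d n mfun A (stFin d τ, btl d n A (stFin d τ) j)) n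
    have h1 := hstep n le_rfl
    rw [hS_eq] at h1
    have h2 : (n : ℤ) * ∑ τ : Fin d, ∑ i : Fin n, cotypeTup d n mfun A τ i
        = (n : ℤ) * (m : ℤ) := by
      rw [Finset.sum_congr rfl fun τ _ => hconv τ]
      linarith
    have hnz : (n : ℤ) ≠ 0 := by positivity
    exact mul_left_cancel₀ hnz (by rw [h2])
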